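/- Let p, q be Lebesgue probability densities on ℝ with finite first moments (∫|x|·p(x) dx < ∞ and ∫|x|·q(x) dx < ∞), and let r ∈ ℝ. Then ∫_ℝ [∫_r^∞ (F_p(z) − 1{x ≤ z})² dz]·q(x) dx − ∫_ℝ [∫_r^∞ (F_q(z) − 1{x ≤ z})² dz]·q(x) dx = ∫_r^∞ (F_p(z) − F_q(z))² dz ≥ 0, and equality holds if and only if p = q Lebesgue-a.e. on [r,∞). In particular, the threshold-weighted CRPS with one-sided weight 1_{[r,∞)} is a strictly locally proper weighted scoring rule. -/

import Mathlib

open MeasureTheory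

noncomputable section

/-- A Lebesgue probability density on `ℝ`. -/
def IsDensityR (p : ℝ → ℝ) : Prop :=
  Measurable p ∧ (∀ x, 0 ≤ p x) ∧ ∫ x, p x = 1

/-- The cumulative distribution function `F_p(z) = ∫_{−∞}^z p(t) dt`. -/
def cdf (p : ℝ → ℝ) (z : ℝ) : ℝ := ∫ t in Set.Iic z, p t

namespace TW
variable {p q : ℝ → ℝ}

lemma integrable (hp : IsDensityR p) : Integrable p := by
  by_contra h
  have := hp.2.2
  rw [integral_undef h] at this
  norm_num at this

lemma cdf_le_one (hp : IsDensityR p) (z : ℝ) : cdf p z ≤ 1 := by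
  rw [← hp.2.2]
  exact setIntegral_le_integral (integrable hp) (Filter.Eventually.of_forall hp.2.1)

lemma cdf_continuous (hp : IsDensityR p) : Continuous (cdf p) := by
  have h : ∀ z, cdf p z = cdf p 0 + ∫ t in (0:ℝ)..z, p t := by
    intro z
    rw [← intervalIntegral.integral_Iic_sub_Iic ((integrable hp).integrableOn)
      ((integrable hp).integrableOn)]
    unfold cdf; ring
  have hc : Continuous fun z => cdf p 0 + ∫ t in (0:ℝ)..z, p t :=
    continuous_const.add (intervalIntegral.continuous_primitive
      (fun a b => (integrable hp).intervalIntegrable) 0)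
  exact (funext h) ▸ hc

lemma one_sub_cdf (hp : IsDensityR p) (z : ℝ) :
    1 - cdf p z = ∫ t in Set.Ioi z, p t := by
  have := integral_add_compl (measurableSet_Iic (a := z)) (integrable hp)
  rw [Set.compl_Iic] at this
  rw [← hp.2.2, ← this]; unfold cdf; ring

lemma lintegral_ofReal_density (hp : IsDensityR p) :
    ∫⁻ t, ENNReal.ofReal (p t) = 1 := by
  rw [← ofReal_integral_eq_lintegral_ofReal (integrable hp)
    (Filter.Eventually.of_forall hp.2.1), hp.2.2, ENNReal.ofReal_one]

lemma cdf_tendsto (hp : IsDensityR p) :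
    Filter.Tendsto (fun n : ℕ => cdf p n) Filter.atTop (nhds 1) := by
  have h := tendsto_setIntegral_of_monotone (f := p) (μ := volume)
    (s := fun n : ℕ => Set.Iic (n : ℝ)) (fun n => measurableSet_Iic)
    (fun a b hab => Set.Iic_subset_Iic.2 (by exact_mod_cast hab))
    ((integrable hp).integrableOn)
  have hu : ⋃ n : ℕ, Set.Iic (n : ℝ) = Set.univ := by
    ext x; simp only [Set.mem_iUnion, Set.mem_Iic, Set.mem_univ, iff_true]
    obtain ⟨n, hn⟩ := exists_nat_ge x
    exact ⟨n, hn⟩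
  rw [hu] at h
  simpa [hp.2.2, cdf] using h

lemma tail_integrable (hp : IsDensityR p) (hpm : Integrable fun x => |x| * p x) (r : ℝ) :
    IntegrableOn (fun z => 1 - cdf p z) (Set.Ici r) := by
  set P : ℝ → ENNReal := fun t => ENNReal.ofReal (p t) with hP
  have hPm : Measurable P := hp.1.ennreal_ofReal
  constructor
  · exact (continuous_const.sub (cdf_continuous hp)).aestronglyMeasurable
  rw [hasFiniteIntegral_iff_ofReal (Filter.Eventually.of_forall fun z =>
    sub_nonneg.2 (cdf_le_one hp z))]
  have h1 : ∀ z : ℝ, ENNReal.ofReal (1 - cdf p z) = ∫⁻ t, (if z < t then P t else 0) := by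
    intro z
    rw [one_sub_cdf hp z, ofReal_integral_eq_lintegral_ofReal ((integrable hp).integrableOn)
      (Filter.Eventually.of_forall fun t => hp.2.1 t),
      ← lintegral_indicator (measurableSet_Ioi (a := z))]
    apply lintegral_congr; intro t
    simp [Set.indicator_apply, Set.mem_Ioi, hP]
  calc ∫⁻ z in Set.Ici r, ENNReal.ofReal (1 - cdf p z)
      = ∫⁻ z in Set.Ici r, ∫⁻ t, (if z < t then P t else 0) := by
        exact lintegral_congr h1
    _ = ∫⁻ t, ∫⁻ z in Set.Ici r, (if z < t then P t else 0) := by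
        apply lintegral_lintegral_swap
        apply Measurable.aemeasurable
        exact Measurable.ite (measurableSet_lt measurable_fst measurable_snd)
          (hPm.comp measurable_snd) measurable_const
    _ = ∫⁻ t, P t * volume (Set.Iio t ∩ Set.Ici r) := by
        apply lintegral_congr; intro t
        have : ∀ z : ℝ, (if z < t then P t else 0) = (Set.Iio t).indicator (fun _ => P t) z := by
          intro z; simp [Set.indicator_apply, Set.mem_Iio]
        simp_rw [this]
        rw [lintegral_indicator measurableSet_Iio, Measure.restrict_restrict measurableSet_Iio,
          setLIntegral_const]
    _ ≤ ∫⁻ t, (ENNReal.ofReal |t| * P t + ENNReal.ofReal |r| * P t) := by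
        apply lintegral_mono; intro t
        have hIco : Set.Iio t ∩ Set.Ici r = Set.Ico r t := by
          ext x; simp [Set.mem_Ico, and_comm]
        simp only []
        rw [hIco, Real.volume_Ico]
        have : ENNReal.ofReal (t - r) ≤ ENNReal.ofReal |t| + ENNReal.ofReal |r| := by
          rw [← ENNReal.ofReal_add (abs_nonneg t) (abs_nonneg r)]
          exact ENNReal.ofReal_le_ofReal (by
            have := abs_nonneg t; have := neg_abs_le r
            nlinarith [le_abs_self t, neg_abs_le r])
        calc P t * ENNReal.ofReal (t - r) ≤ P t * (ENNReal.ofReal |t| + ENNReal.ofReal |r|) := by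
              exact mul_le_mul_right this _
          _ = ENNReal.ofReal |t| * P t + ENNReal.ofReal |r| * P t := by
              rw [mul_add, mul_comm (P t), mul_comm (P t)]
    _ < ⊤ := by
        rw [lintegral_add_left (by fun_prop)]
        apply ENNReal.add_lt_top.2
        constructor
        · have h2 : ∀ t : ℝ, (ENNReal.ofReal |t|) * P t = ENNReal.ofReal (|t| * p t) := by
            intro t; rw [ENNReal.ofReal_mul (abs_nonneg t)]
          have := (hasFiniteIntegral_iff_ofReal (Filter.Eventually.of_forall fun t =>
            mul_nonneg (abs_nonneg t) (hp.2.1 t))).1 hpm.hasFiniteIntegral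
          calc ∫⁻ t, (ENNReal.ofReal |t|) * P t = ∫⁻ t, ENNReal.ofReal (|t| * p t) := by
                exact lintegral_congr h2
            _ < ⊤ := this
        · rw [lintegral_const_mul _ hPm, lintegral_ofReal_density hp]
          simp [ENNReal.ofReal_lt_top]


lemma cdf_nonneg (hp : IsDensityR p) (z : ℝ) : 0 ≤ cdf p z :=
  setIntegral_nonneg measurableSet_Iic fun x _ => hp.2.1 x

lemma abs_cdf_diff_le (hp : IsDensityR p) (hq : IsDensityR q) (z : ℝ) :
    |cdf p z - cdf q z| ≤ (1 - cdf p z) + (1 - cdf q z) := by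
  have h1 := cdf_nonneg hp z; have h2 := cdf_le_one hp z
  have h3 := cdf_nonneg hq z; have h4 := cdf_le_one hq z
  rw [abs_le]; constructor <;> nlinarith

lemma diff_integrable (hp : IsDensityR p) (hq : IsDensityR q)
    (hpm : Integrable fun x => |x| * p x) (hqm : Integrable fun x => |x| * q x) (r : ℝ) :
    IntegrableOn (fun z => cdf p z - cdf q z) (Set.Ici r) := by
  apply Integrable.mono' ((tail_integrable hp hpm r).add (tail_integrable hq hqm r))
  · exact ((cdf_continuous hp).sub (cdf_continuous hq)).aestronglyMeasurable
  · exact Filter.Eventually.of_forall fun z => abs_cdf_diff_le hp hq z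

lemma sq_diff_integrable (hp : IsDensityR p) (hq : IsDensityR q)
    (hpm : Integrable fun x => |x| * p x) (hqm : Integrable fun x => |x| * q x) (r : ℝ) :
    IntegrableOn (fun z => (cdf p z - cdf q z) ^ 2) (Set.Ici r) := by
  apply Integrable.mono' (diff_integrable hp hq hpm hqm r).abs
  · exact (((cdf_continuous hp).sub (cdf_continuous hq)).pow 2).aestronglyMeasurable
  · apply Filter.Eventually.of_forall
    intro z
    have h1 := cdf_nonneg hp z; have h2 := cdf_le_one hp z
    have h3 := cdf_nonneg hq z; have h4 := cdf_le_one hq z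
    have : |cdf p z - cdf q z| ≤ 1 := by rw [abs_le]; constructor <;> nlinarith
    calc ‖(cdf p z - cdf q z) ^ 2‖ = |cdf p z - cdf q z| * |cdf p z - cdf q z| := by
          rw [Real.norm_eq_abs, abs_of_nonneg (sq_nonneg _), sq, ← abs_mul_abs_self]
      _ ≤ 1 * |cdf p z - cdf q z| := by
          apply mul_le_mul_of_nonneg_right this (abs_nonneg _)
      _ = |cdf p z - cdf q z| := one_mul _

lemma inner_integrable (hp : IsDensityR p) (hpm : Integrable fun x => |x| * p x)
    (r x : ℝ) :
    IntegrableOn (fun z => (cdf p z - if x ≤ z then 1 else 0) ^ 2) (Set.Ici r) := by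
  have hind : Measurable fun z : ℝ => if x ≤ z then (1:ℝ) else 0 :=
    Measurable.ite measurableSet_Ici measurable_const measurable_const
  have hib : Integrable (fun z => Set.indicator (Set.Ico r x) (fun _ => (1:ℝ)) z + (1 - cdf p z))
      (volume.restrict (Set.Ici r)) := by
    apply Integrable.add _ (tail_integrable hp hpm r)
    rw [integrable_indicator_iff measurableSet_Ico]
    refine integrableOn_const (ne_of_lt ?_)
    calc (volume.restrict (Set.Ici r)) (Set.Ico r x) ≤ volume (Set.Ico r x) :=
          Measure.restrict_apply_le _ _
      _ < ⊤ := measure_Ico_lt_top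
  apply Integrable.mono' hib
  · exact (((cdf_continuous hp).measurable.sub hind).pow_const 2).aestronglyMeasurable
  · filter_upwards [ae_restrict_mem measurableSet_Ici] with z hz
    have h1 := cdf_nonneg hp z; have h2 := cdf_le_one hp z
    rw [Real.norm_eq_abs, abs_of_nonneg (sq_nonneg _)]
    by_cases hxz : x ≤ z
    · simp only [hxz, if_true]
      have : Set.indicator (Set.Ico r x) (fun _ => (1:ℝ)) z = 0 := by
        apply Set.indicator_of_notMem
        simp [Set.mem_Ico]; intro h; linarith
      rw [this]; nlinarith
    · simp only [hxz, if_false]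
      have : Set.indicator (Set.Ico r x) (fun _ => (1:ℝ)) z = 1 := by
        apply Set.indicator_of_mem
        exact ⟨hz, lt_of_not_ge hxz⟩
      rw [this]; nlinarith

lemma score_nonneg (r x : ℝ) :
    0 ≤ ∫ z in Set.Ici r, (cdf p z - if x ≤ z then 1 else 0) ^ 2 :=
  setIntegral_nonneg measurableSet_Ici fun z _ => sq_nonneg _

lemma score_le (hp : IsDensityR p) (hpm : Integrable fun x => |x| * p x) (r x : ℝ) :
    ∫ z in Set.Ici r, (cdf p z - if x ≤ z then 1 else 0) ^ 2
      ≤ |x| + |r| + ∫ z in Set.Ici r, (1 - cdf p z) := by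
  have hib : Integrable (fun z => Set.indicator (Set.Ico r x) (fun _ => (1:ℝ)) z + (1 - cdf p z))
      (volume.restrict (Set.Ici r)) := by
    apply Integrable.add _ (tail_integrable hp hpm r)
    rw [integrable_indicator_iff measurableSet_Ico]
    refine integrableOn_const (ne_of_lt ?_)
    calc (volume.restrict (Set.Ici r)) (Set.Ico r x) ≤ volume (Set.Ico r x) :=
          Measure.restrict_apply_le _ _
      _ < ⊤ := measure_Ico_lt_top
  have hmono : ∫ z in Set.Ici r, (cdf p z - if x ≤ z then 1 else 0) ^ 2
      ≤ ∫ z in Set.Ici r, (Set.indicator (Set.Ico r x) (fun _ => (1:ℝ)) z + (1 - cdf p z)) := by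
    apply integral_mono_ae (inner_integrable hp hpm r x) hib
    filter_upwards [ae_restrict_mem measurableSet_Ici] with z hz
    have h1 := cdf_nonneg hp z; have h2 := cdf_le_one hp z
    by_cases hxz : x ≤ z
    · simp only [hxz, if_true]
      have : Set.indicator (Set.Ico r x) (fun _ => (1:ℝ)) z = 0 := by
        apply Set.indicator_of_notMem
        simp [Set.mem_Ico]; intro h; linarith
      rw [this]; nlinarith
    · simp only [hxz, if_false]
      have : Set.indicator (Set.Ico r x) (fun _ => (1:ℝ)) z = 1 := by
        apply Set.indicator_of_mem
        exact ⟨hz, lt_of_not_ge hxz⟩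
      rw [this]; nlinarith
  have heq : ∫ z in Set.Ici r, (Set.indicator (Set.Ico r x) (fun _ => (1:ℝ)) z + (1 - cdf p z))
      = ((volume.restrict (Set.Ici r)) (Set.Ico r x)).toReal + ∫ z in Set.Ici r, (1 - cdf p z) := by
    rw [integral_add _ (tail_integrable hp hpm r)]
    · congr 1
      rw [integral_indicator_const (1:ℝ) measurableSet_Ico, smul_eq_mul, mul_one]
      rfl
    · rw [integrable_indicator_iff measurableSet_Ico]
      refine integrableOn_const (ne_of_lt ?_)
      calc (volume.restrict (Set.Ici r)) (Set.Ico r x) ≤ volume (Set.Ico r x) :=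
            Measure.restrict_apply_le _ _
        _ < ⊤ := measure_Ico_lt_top
  have hvol : ((volume.restrict (Set.Ici r)) (Set.Ico r x)).toReal ≤ |x| + |r| := by
    calc ((volume.restrict (Set.Ici r)) (Set.Ico r x)).toReal
        ≤ (volume (Set.Ico r x)).toReal := by
          apply ENNReal.toReal_mono (by simp [measure_Ico_lt_top.ne])
          exact Measure.restrict_apply_le _ _
      _ ≤ |x| + |r| := by
          rw [Real.volume_Ico]
          rcases le_or_gt x r with h | h
          · rw [ENNReal.ofReal_eq_zero.2 (by linarith)]
            simp [add_nonneg (abs_nonneg x) (abs_nonneg r)]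
          · rw [ENNReal.toReal_ofReal (by linarith)]
            have := le_abs_self x; have := neg_abs_le r
            linarith
  linarith


lemma score_meas (hp : IsDensityR p) (r : ℝ) :
    AEStronglyMeasurable
      (fun x => ∫ z in Set.Ici r, (cdf p z - if x ≤ z then 1 else 0) ^ 2) volume := by
  have hm : StronglyMeasurable fun w : ℝ × ℝ =>
      (cdf p w.2 - if w.1 ≤ w.2 then (1:ℝ) else 0) ^ 2 := by
    apply Measurable.stronglyMeasurable
    exact (((cdf_continuous hp).measurable.comp measurable_snd).sub
      (Measurable.ite (measurableSet_le measurable_fst measurable_snd)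
        measurable_const measurable_const)).pow_const 2
  exact (hm.integral_prod_right' (ν := volume.restrict (Set.Ici r))).aestronglyMeasurable

lemma score_mul_integrable (hp : IsDensityR p) (hq : IsDensityR q)
    (hpm : Integrable fun x => |x| * p x) (hqm : Integrable fun x => |x| * q x) (r : ℝ) :
    Integrable (fun x => (∫ z in Set.Ici r, (cdf p z - if x ≤ z then 1 else 0) ^ 2) * q x) := by
  set C := ∫ z in Set.Ici r, (1 - cdf p z) with hC
  have hb : Integrable (fun x => |x| * q x + (|r| + C) * q x) :=
    hqm.add ((integrable hq).const_mul _)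
  have hmeas : AEStronglyMeasurable
      (fun x => (∫ z in Set.Ici r, (cdf p z - if x ≤ z then 1 else 0) ^ 2) * q x) volume :=
    (score_meas hp r).mul hq.1.aestronglyMeasurable
  apply Integrable.mono' hb hmeas
  apply Filter.Eventually.of_forall
  intro x
  have h0 := score_nonneg (p := p) r x
  have h1 := score_le hp hpm r x
  rw [Real.norm_eq_abs, abs_of_nonneg (mul_nonneg h0 (hq.2.1 x))]
  have := hq.2.1 x
  nlinarith

lemma inner_x (hp : IsDensityR p) (hq : IsDensityR q) (z : ℝ) :
    ∫ x, ((cdf p z - if x ≤ z then 1 else 0) ^ 2 - (cdf q z - if x ≤ z then 1 else 0) ^ 2) * q x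
      = (cdf p z - cdf q z) ^ 2 := by
  set a := cdf p z with ha
  set b := cdf q z with hb
  have hpt : ∀ x, ((a - if x ≤ z then 1 else 0) ^ 2 - (b - if x ≤ z then 1 else 0) ^ 2) * q x
      = (a ^ 2 - b ^ 2) * q x - (2 * (a - b)) * Set.indicator (Set.Iic z) q x := by
    intro x
    by_cases hxz : x ≤ z
    · rw [Set.indicator_of_mem (Set.mem_Iic.mpr hxz) q]
      simp only [hxz, if_true]; ring
    · rw [Set.indicator_of_notMem (fun h => hxz (Set.mem_Iic.mp h)) q]
      simp only [hxz, if_false]; ring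
  rw [integral_congr_ae (Filter.Eventually.of_forall hpt), integral_sub
    (((integrable hq)).const_mul _) (((integrable hq).indicator measurableSet_Iic).const_mul _)]
  rw [integral_const_mul, integral_const_mul, hq.2.2, integral_indicator measurableSet_Iic]
  show (a ^ 2 - b ^ 2) * 1 - 2 * (a - b) * cdf q z = (a - b) ^ 2
  rw [← hb]; ring

lemma key (hp : IsDensityR p) (hq : IsDensityR q)
    (hpm : Integrable fun x => |x| * p x) (hqm : Integrable fun x => |x| * q x) (r : ℝ) :
    (∫ x, (∫ z in Set.Ici r, (cdf p z - if x ≤ z then 1 else 0) ^ 2) * q x)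
        - (∫ x, (∫ z in Set.Ici r, (cdf q z - if x ≤ z then 1 else 0) ^ 2) * q x)
      = ∫ z in Set.Ici r, (cdf p z - cdf q z) ^ 2 := by
  rw [← integral_sub (score_mul_integrable hp hq hpm hqm r)
    (score_mul_integrable hq hq hqm hqm r)]
  have step1 : ∀ x, (∫ z in Set.Ici r, (cdf p z - if x ≤ z then 1 else 0) ^ 2) * q x
      - (∫ z in Set.Ici r, (cdf q z - if x ≤ z then 1 else 0) ^ 2) * q x
      = ∫ z in Set.Ici r,
          ((cdf p z - if x ≤ z then 1 else 0) ^ 2 - (cdf q z - if x ≤ z then 1 else 0) ^ 2) * q x := by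
    intro x
    rw [← sub_mul, ← integral_sub (inner_integrable hp hpm r x) (inner_integrable hq hqm r x),
      integral_mul_const]
  rw [integral_congr_ae (Filter.Eventually.of_forall step1)]
  have hswap := integral_integral_swap (μ := (volume : Measure ℝ))
    (ν := volume.restrict (Set.Ici r))
    (f := fun x z => ((cdf p z - if x ≤ z then 1 else 0) ^ 2
      - (cdf q z - if x ≤ z then 1 else 0) ^ 2) * q x) ?_
  · rw [hswap]
    apply setIntegral_congr_ae measurableSet_Ici
    apply Filter.Eventually.of_forall
    intro z _
    exact inner_x hp hq z
  · -- integrability on the product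
    have hbound : Integrable (fun w : ℝ × ℝ => q w.1 * (2 * |cdf p w.2 - cdf q w.2|))
        ((volume : Measure ℝ).prod (volume.restrict (Set.Ici r))) :=
      Integrable.mul_prod (integrable hq) ((diff_integrable hp hq hpm hqm r).abs.const_mul 2)
    apply Integrable.mono' hbound
    · apply Measurable.aestronglyMeasurable
      have hcp : Measurable fun w : ℝ × ℝ => cdf p w.2 :=
        (cdf_continuous hp).measurable.comp measurable_snd
      have hcq : Measurable fun w : ℝ × ℝ => cdf q w.2 :=
        (cdf_continuous hq).measurable.comp measurable_snd
      have hind : Measurable fun w : ℝ × ℝ => if w.1 ≤ w.2 then (1:ℝ) else 0 :=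
        Measurable.ite (measurableSet_le measurable_fst measurable_snd)
          measurable_const measurable_const
      exact (((hcp.sub hind).pow_const 2).sub ((hcq.sub hind).pow_const 2)).mul
        (hq.1.comp measurable_fst)
    · apply Filter.Eventually.of_forall
      rintro ⟨x, z⟩
      simp only [Function.uncurry]
      rw [Real.norm_eq_abs, abs_mul, abs_of_nonneg (hq.2.1 x), mul_comm]
      apply mul_le_mul_of_nonneg_left _ (hq.2.1 x)
      have h1 := cdf_nonneg hp z; have h2 := cdf_le_one hp z
      have h3 := cdf_nonneg hq z; have h4 := cdf_le_one hq z
      set i : ℝ := if x ≤ z then 1 else 0 with hi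
      have hi0 : 0 ≤ i := by rw [hi]; split <;> norm_num
      have hi1 : i ≤ 1 := by rw [hi]; split <;> norm_num
      have hfact : (cdf p z - i) ^ 2 - (cdf q z - i) ^ 2
          = (cdf p z - cdf q z) * (cdf p z + cdf q z - 2 * i) := by ring
      rw [hfact, abs_mul]
      have : |cdf p z + cdf q z - 2 * i| ≤ 2 := by rw [abs_le]; constructor <;> nlinarith
      calc |cdf p z - cdf q z| * |cdf p z + cdf q z - 2 * i|
          ≤ |cdf p z - cdf q z| * 2 := mul_le_mul_of_nonneg_left this (abs_nonneg _)
        _ = 2 * |cdf p z - cdf q z| := mul_comm _ _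


lemma cdf_sub_eq (hp : IsDensityR p) {a b : ℝ} (hab : a ≤ b) :
    cdf p b - cdf p a = ∫ t in Set.Ioc a b, p t := by
  have hu : Set.Iic a ∪ Set.Ioc a b = Set.Iic b := Set.Iic_union_Ioc_eq_Iic hab
  have hd : Disjoint (Set.Iic a) (Set.Ioc a b) := by
    apply Set.disjoint_left.2
    rintro x hx ⟨h1, _⟩
    exact absurd (Set.mem_Iic.1 hx) (not_le.2 h1)
  have := setIntegral_union hd measurableSet_Ioc
    ((integrable hp).integrableOn (s := Set.Iic a)) ((integrable hp).integrableOn)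
  rw [hu] at this
  show (∫ t in Set.Iic b, p t) - ∫ t in Set.Iic a, p t = _
  rw [this]; ring

lemma cdf_eq_of_ae (hp : IsDensityR p) (hq : IsDensityR q) (r : ℝ)
    (hae : ∀ᵐ z, z ∈ Set.Ici r → cdf p z = cdf q z) :
    ∀ z ∈ Set.Ici r, cdf p z = cdf q z := by
  have hcont : Continuous fun z => cdf p z - cdf q z :=
    (cdf_continuous hp).sub (cdf_continuous hq)
  have hU : IsOpen ({z | cdf p z - cdf q z ≠ 0} ∩ Set.Ioi r) :=
    ((isClosed_eq hcont continuous_const).isOpen_compl).inter isOpen_Ioi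
  have hnull : volume ({z | cdf p z - cdf q z ≠ 0} ∩ Set.Ioi r) = 0 := by
    apply measure_mono_null _ (ae_iff.1 hae)
    rintro z ⟨hz1, hz2⟩
    exact fun h => hz1 (sub_eq_zero.2 (h (Set.mem_Ici.2 (le_of_lt (Set.mem_Ioi.1 hz2)))))
  have hempty := hU.eq_empty_of_measure_zero hnull
  have hIoi : ∀ z, r < z → cdf p z = cdf q z := by
    intro z hz
    by_contra hne
    have : z ∈ ({z | cdf p z - cdf q z ≠ 0} ∩ Set.Ioi r) :=
      ⟨fun h => hne (by linarith [sub_eq_zero.1 h]), hz⟩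
    rw [hempty] at this
    exact this
  have hr : cdf p r = cdf q r := by
    have hseq : Filter.Tendsto (fun n : ℕ => r + 1 / (n + 1)) Filter.atTop (nhds r) := by
      have := tendsto_one_div_add_atTop_nhds_zero_nat (𝕜 := ℝ)
      have h2 := Filter.Tendsto.add (tendsto_const_nhds (x := r) (f := Filter.atTop (α := ℕ))) this
      simpa using h2
    have h3 := ((hcont.tendsto r).comp hseq)
    have h4 : ((fun w => cdf p w - cdf q w) ∘ fun n : ℕ => r + 1 / (n + 1))
        = fun _ : ℕ => (0:ℝ) := by
      funext n
      have hpos : (0:ℝ) < 1 / (n + 1) := by positivity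
      exact sub_eq_zero.2 (hIoi _ (by linarith))
    rw [h4] at h3
    have := tendsto_nhds_unique h3 tendsto_const_nhds
    linarith [sub_eq_zero.1 this]
  intro z hz
  rcases eq_or_lt_of_le (Set.mem_Ici.1 hz) with h | h
  · exact h ▸ hr
  · exact hIoi z h

lemma density_ae_of_cdf_eq (hp : IsDensityR p) (hq : IsDensityR q) (r : ℝ)
    (hzero : ∀ z ∈ Set.Ici r, cdf p z = cdf q z) :
    ∀ᵐ x, x ∈ Set.Ici r → p x = q x := by
  set P : ℝ → ENNReal := fun t => ENNReal.ofReal (p t) with hP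
  set Q : ℝ → ENNReal := fun t => ENNReal.ofReal (q t) with hQ
  have hPm : Measurable P := hp.1.ennreal_ofReal
  have hQm : Measurable Q := hq.1.ennreal_ofReal
  have hfin : ∫⁻ t, P t ∂(volume.restrict (Set.Ioi r)) ≠ ⊤ := by
    apply ne_of_lt
    calc ∫⁻ t, P t ∂(volume.restrict (Set.Ioi r)) ≤ ∫⁻ t, P t := setLIntegral_le_lintegral _ _
      _ = 1 := lintegral_ofReal_density hp
      _ < ⊤ := ENNReal.one_lt_top
  set μ₁ := (volume.restrict (Set.Ioi r)).withDensity P with hμ₁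
  set μ₂ := (volume.restrict (Set.Ioi r)).withDensity Q with hμ₂
  haveI : IsFiniteMeasure μ₁ := by
    constructor
    rw [hμ₁, withDensity_apply _ MeasurableSet.univ, Measure.restrict_univ]
    exact lt_of_le_of_ne (le_top) hfin
  have hIic : ∀ a : ℝ, μ₁ (Set.Iic a) = μ₂ (Set.Iic a) := by
    intro a
    rw [hμ₁, hμ₂, withDensity_apply _ measurableSet_Iic, withDensity_apply _ measurableSet_Iic,
      Measure.restrict_restrict measurableSet_Iic]
    have hIoc : Set.Iic a ∩ Set.Ioi r = Set.Ioc r a := by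
      ext x; simp [Set.mem_Ioc, and_comm]
    rw [hIoc]
    have hep : ∫⁻ t in Set.Ioc r a, P t = ENNReal.ofReal (∫ t in Set.Ioc r a, p t) :=
      (ofReal_integral_eq_lintegral_ofReal ((integrable hp).integrableOn)
        (Filter.Eventually.of_forall fun t => hp.2.1 t)).symm
    have heq : ∫⁻ t in Set.Ioc r a, Q t = ENNReal.ofReal (∫ t in Set.Ioc r a, q t) :=
      (ofReal_integral_eq_lintegral_ofReal ((integrable hq).integrableOn)
        (Filter.Eventually.of_forall fun t => hq.2.1 t)).symm
    rw [hep, heq]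
    congr 1
    rcases le_or_gt a r with h | h
    · rw [Set.Ioc_eq_empty (not_lt.2 h)]
      simp
    · rw [← cdf_sub_eq hp (le_of_lt h), ← cdf_sub_eq hq (le_of_lt h),
        hzero a (Set.mem_Ici.2 (le_of_lt h)), hzero r (Set.mem_Ici.2 le_rfl)]
  have hμeq : μ₁ = μ₂ := Measure.ext_of_Iic μ₁ μ₂ hIic
  have hae : P =ᶠ[ae (volume.restrict (Set.Ioi r))] Q :=
    (withDensity_eq_iff hPm.aemeasurable hQm.aemeasurable hfin).1 hμeq
  have hae2 : ∀ᵐ x, x ∈ Set.Ioi r → p x = q x := by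
    rw [← ae_restrict_iff' measurableSet_Ioi]
    filter_upwards [hae] with x hx
    exact (ENNReal.ofReal_eq_ofReal_iff (hp.2.1 x) (hq.2.1 x)).1 hx
  have hne : ∀ᵐ x : ℝ, x ≠ r := by
    rw [ae_iff]
    have : {x : ℝ | ¬x ≠ r} = {r} := by ext x; simp
    rw [this]
    exact Real.volume_singleton
  filter_upwards [hae2, hne] with x hx hxr hxin
  exact hx (lt_of_le_of_ne (Set.mem_Ici.1 hxin) (Ne.symm hxr))

lemma sq_int_zero_of_ae (hp : IsDensityR p) (hq : IsDensityR q) (r : ℝ)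
    (hpq : ∀ᵐ x, x ∈ Set.Ici r → p x = q x) :
    ∫ z in Set.Ici r, (cdf p z - cdf q z) ^ 2 = 0 := by
  have hconst : ∀ z ∈ Set.Ici r, cdf p z - cdf q z = cdf p r - cdf q r := by
    intro z hz
    have h1 := cdf_sub_eq hp (Set.mem_Ici.1 hz)
    have h2 := cdf_sub_eq hq (Set.mem_Ici.1 hz)
    have h3 : ∫ t in Set.Ioc r z, p t = ∫ t in Set.Ioc r z, q t := by
      apply setIntegral_congr_ae measurableSet_Ioc
      filter_upwards [hpq] with x hx hxin
      exact hx (Set.mem_Ici.2 (le_of_lt hxin.1))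
    linarith [h1, h2, h3]
  have hc0 : cdf p r - cdf q r = 0 := by
    have ht : Filter.Tendsto (fun n : ℕ => cdf p n - cdf q n) Filter.atTop (nhds 0) := by
      have := (cdf_tendsto hp).sub (cdf_tendsto hq)
      simpa using this
    have hev : ∀ᶠ n : ℕ in Filter.atTop, cdf p n - cdf q n = cdf p r - cdf q r := by
      obtain ⟨N, hN⟩ := exists_nat_ge r
      filter_upwards [Filter.eventually_ge_atTop N] with n hn
      exact hconst n (Set.mem_Ici.2 (le_trans hN (by exact_mod_cast hn)))
    have ht2 : Filter.Tendsto (fun n : ℕ => cdf p n - cdf q n) Filter.atTop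
        (nhds (cdf p r - cdf q r)) :=
      Filter.Tendsto.congr' (Filter.EventuallyEq.symm hev) tendsto_const_nhds
    exact (tendsto_nhds_unique ht2 ht)
  have : ∫ z in Set.Ici r, (cdf p z - cdf q z) ^ 2 = ∫ z in Set.Ici r, (0:ℝ) := by
    apply setIntegral_congr_fun measurableSet_Ici
    intro z hz
    show (cdf p z - cdf q z) ^ 2 = 0
    rw [hconst z hz, hc0]
    norm_num
  rw [this, integral_zero]

end TW

/-- For Lebesgue probability densities `p, q` on `ℝ` with finite first
moments and `r ∈ ℝ`, the expected threshold-weighted CRPS (weight `1_{[r,∞)}`) difference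
under `q` equals `∫_r^∞ (F_p − F_q)² dz ≥ 0`, with equality iff `p = q` Lebesgue-a.e. on
`[r,∞)`; so the one-sided threshold-weighted CRPS is strictly locally proper. -/
theorem twCRPS_strictly_locally_proper
    (p q : ℝ → ℝ) (hp : IsDensityR p) (hq : IsDensityR q)
    (hpm : Integrable fun x => |x| * p x) (hqm : Integrable fun x => |x| * q x)
    (r : ℝ) :
    (∫ x, (∫ z in Set.Ici r, (cdf p z - if x ≤ z then 1 else 0) ^ 2) * q x)
          - (∫ x, (∫ z in Set.Ici r, (cdf q z - if x ≤ z then 1 else 0) ^ 2) * q x)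
        = ∫ z in Set.Ici r, (cdf p z - cdf q z) ^ 2 ∧
      0 ≤ ∫ z in Set.Ici r, (cdf p z - cdf q z) ^ 2 ∧
      ((∫ x, (∫ z in Set.Ici r, (cdf p z - if x ≤ z then 1 else 0) ^ 2) * q x)
            - (∫ x, (∫ z in Set.Ici r, (cdf q z - if x ≤ z then 1 else 0) ^ 2) * q x)
          = 0
        ↔ ∀ᵐ x, x ∈ Set.Ici r → p x = q x) := by
  refine ⟨TW.key hp hq hpm hqm r,
    setIntegral_nonneg measurableSet_Ici fun z _ => sq_nonneg _, ?_, ?_⟩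
  · intro h0
    rw [TW.key hp hq hpm hqm r] at h0
    have hae := (integral_eq_zero_iff_of_nonneg (fun z => sq_nonneg _)
      (TW.sq_diff_integrable hp hq hpm hqm r)).1 h0
    have hae2 : ∀ᵐ z, z ∈ Set.Ici r → cdf p z = cdf q z := by
      rw [← ae_restrict_iff' measurableSet_Ici]
      filter_upwards [hae] with z hz
      have : (cdf p z - cdf q z) ^ 2 = 0 := hz
      exact sub_eq_zero.1 ((pow_eq_zero_iff (two_ne_zero)).1 this)
    exact TW.density_ae_of_cdf_eq hp hq r (TW.cdf_eq_of_ae hp hq r hae2)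
  · intro hpq
    rw [TW.key hp hq hpm hqm r]
    exact TW.sq_int_zero_of_ae hp hq r hpq

end
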